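/- arXiv:1403.2543 — 3 statements merged into one kernel-verified Lean document; each statement's English description precedes it below -/
import Mathlib

section
/- Let A and B be positive semidefinite d×d complex matrices and let Λ be a CPTP map in Kraus form from d×d matrices to d'×d' matrices. Then Tr[(Λ(A) − Λ(B))₊] ≤ Tr[(A − B)₊]. -/
open Matrix
open scoped ComplexOrder

noncomputable section

/-- Positive part `C₊` of a Hermitian matrix, obtained by applying `x ↦ max x 0` to the
eigenvalues in a spectral decomposition (junk value `0` for non-Hermitian input). -/
def matPos {n : Type*} [Fintype n] [DecidableEq n] (A : Matrix n n ℂ) : Matrix n n ℂ :=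
  if hA : A.IsHermitian then
    (hA.eigenvectorUnitary : Matrix n n ℂ) *
      Matrix.diagonal (fun i => ((max (hA.eigenvalues i) 0 : ℝ) : ℂ)) *
      star (hA.eigenvectorUnitary : Matrix n n ℂ)
  else 0

/-- `Tr C₊` as a real number. -/
def trPos {n : Type*} [Fintype n] [DecidableEq n] (A : Matrix n n ℂ) : ℝ :=
  (matPos A).trace.re

/-- Spectral projection of a Hermitian matrix onto `[0, ∞)` (junk value `0` for
non-Hermitian input). -/
def projNonneg {n : Type*} [Fintype n] [DecidableEq n] (A : Matrix n n ℂ) : Matrix n n ℂ :=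
  if hA : A.IsHermitian then
    (hA.eigenvectorUnitary : Matrix n n ℂ) *
      Matrix.diagonal (fun i => if 0 ≤ hA.eigenvalues i then (1 : ℂ) else 0) *
      star (hA.eigenvectorUnitary : Matrix n n ℂ)
  else 0

section Aux

variable {n : Type*} [Fintype n] [DecidableEq n]

lemma trace_re_nonneg' {M : Matrix n n ℂ} (hM : M.PosSemidef) : 0 ≤ M.trace.re := by
  have h : ∀ i, 0 ≤ M i i := fun i => by
    exact hM.diag_nonneg
  rw [Matrix.trace]
  rw [Complex.re_sum]
  exact Finset.sum_nonneg fun i _ => (Complex.nonneg_iff.mp (h i)).1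

lemma trace_mul_re_nonneg' {P X : Matrix n n ℂ} (hP : P.PosSemidef) (hX : X.PosSemidef) :
    0 ≤ (P * X).trace.re := by
  obtain ⟨Q, hQ⟩ : ∃ Q : Matrix n n ℂ, P = star Q * Q := by
    open MatrixOrder in exact CStarAlgebra.nonneg_iff_eq_star_mul_self.mp hP.nonneg
  rw [hQ, ← Matrix.trace_mul_cycle]
  exact trace_re_nonneg' (hX.mul_mul_conjTranspose_same Q)

lemma sum_posSemidef' {ι : Type*} [Fintype ι] (f : ι → Matrix n n ℂ)
    (h : ∀ i, (f i).PosSemidef) : (∑ i, f i).PosSemidef := by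
  classical
  exact Finset.sum_induction f _ (fun a b ha hb => ha.add hb) Matrix.PosSemidef.zero
    (fun i _ => h i)

lemma conj_diag_posSemidef {A : Matrix n n ℂ} (hA : A.IsHermitian) {f : n → ℂ}
    (hf : ∀ i, 0 ≤ f i) :
    ((hA.eigenvectorUnitary : Matrix n n ℂ) * Matrix.diagonal f *
      star (hA.eigenvectorUnitary : Matrix n n ℂ)).PosSemidef := by
  rw [Matrix.star_eq_conjTranspose]
  exact (Matrix.PosSemidef.diagonal hf).mul_mul_conjTranspose_same _

lemma conj_diag_mul {A : Matrix n n ℂ} (hA : A.IsHermitian) (f g : n → ℂ) :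
    ((hA.eigenvectorUnitary : Matrix n n ℂ) * Matrix.diagonal f *
      star (hA.eigenvectorUnitary : Matrix n n ℂ)) *
    ((hA.eigenvectorUnitary : Matrix n n ℂ) * Matrix.diagonal g *
      star (hA.eigenvectorUnitary : Matrix n n ℂ)) =
    (hA.eigenvectorUnitary : Matrix n n ℂ) * Matrix.diagonal (fun i => f i * g i) *
      star (hA.eigenvectorUnitary : Matrix n n ℂ) := by
  set U := (hA.eigenvectorUnitary : Matrix n n ℂ)
  have h1 : star U * U = 1 := Unitary.coe_star_mul_self _
  have key : U * Matrix.diagonal f * star U * (U * Matrix.diagonal g * star U)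
      = U * Matrix.diagonal f * ((star U * U) * (Matrix.diagonal g * star U)) := by
    simp only [Matrix.mul_assoc]
  rw [key, h1, one_mul, ← Matrix.mul_assoc, Matrix.mul_assoc U,
    Matrix.diagonal_mul_diagonal]

lemma matPos_posSemidef {A : Matrix n n ℂ} (hA : A.IsHermitian) : (matPos A).PosSemidef := by
  rw [matPos, dif_pos hA]
  exact conj_diag_posSemidef hA fun i =>
    Complex.zero_le_real.mpr (le_max_right _ _)

lemma matPos_sub_posSemidef {A : Matrix n n ℂ} (hA : A.IsHermitian) :
    (matPos A - A).PosSemidef := by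
  have key : matPos A - A = (hA.eigenvectorUnitary : Matrix n n ℂ) *
      (Matrix.diagonal (fun i => ((max (hA.eigenvalues i) 0 : ℝ) : ℂ)) -
        Matrix.diagonal (RCLike.ofReal ∘ hA.eigenvalues)) *
      star (hA.eigenvectorUnitary : Matrix n n ℂ) := by
    rw [Matrix.mul_sub, Matrix.sub_mul, ← hA.spectral_theorem.trans (Unitary.conjStarAlgAut_apply ..), matPos, dif_pos hA]
  rw [key, Matrix.diagonal_sub]
  refine conj_diag_posSemidef hA fun i => ?_
  have h : ((max (hA.eigenvalues i) 0 : ℝ) : ℂ) - (RCLike.ofReal ∘ hA.eigenvalues) i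
      = ((max (hA.eigenvalues i) 0 - hA.eigenvalues i : ℝ) : ℂ) := by
    simp [Complex.ofReal_sub]
  rw [h]
  exact Complex.zero_le_real.mpr (by simp [le_max_left])

lemma projNonneg_posSemidef {A : Matrix n n ℂ} (hA : A.IsHermitian) :
    (projNonneg A).PosSemidef := by
  rw [projNonneg, dif_pos hA]
  refine conj_diag_posSemidef hA fun i => ?_
  split <;> norm_num

lemma one_sub_projNonneg_posSemidef {A : Matrix n n ℂ} (hA : A.IsHermitian) :
    ((1 : Matrix n n ℂ) - projNonneg A).PosSemidef := by
  rw [projNonneg, dif_pos hA]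
  set U := (hA.eigenvectorUnitary : Matrix n n ℂ)
  have h1 : U * star U = 1 := Unitary.coe_mul_star_self _
  have hone : (1 : Matrix n n ℂ) = U * Matrix.diagonal (fun _ => (1 : ℂ)) * star U := by
    rw [Matrix.diagonal_one, Matrix.mul_one, h1]
  rw [hone, ← Matrix.sub_mul, ← Matrix.mul_sub, Matrix.diagonal_sub]
  refine conj_diag_posSemidef hA fun i => ?_
  by_cases h : 0 ≤ hA.eigenvalues i <;> simp [h]

lemma projNonneg_mul {A : Matrix n n ℂ} (hA : A.IsHermitian) :
    projNonneg A * A = matPos A := by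
  have h2 := conj_diag_mul hA (fun i => if 0 ≤ hA.eigenvalues i then (1 : ℂ) else 0)
    (RCLike.ofReal ∘ hA.eigenvalues)
  rw [← hA.spectral_theorem.trans (Unitary.conjStarAlgAut_apply ..)] at h2
  have h3 : (fun i => (if 0 ≤ hA.eigenvalues i then (1 : ℂ) else 0) *
      (RCLike.ofReal ∘ hA.eigenvalues) i)
      = fun i => ((max (hA.eigenvalues i) 0 : ℝ) : ℂ) := by
    funext i
    simp only [Function.comp_apply]
    split
    · rename_i h
      rw [one_mul, max_eq_left h]
      rfl
    · rename_i h
      rw [zero_mul, max_eq_right (le_of_not_ge h)]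
      simp
  rw [projNonneg, dif_pos hA, matPos, dif_pos hA, h2, h3]

lemma trPos_eq_trace_proj_mul {A : Matrix n n ℂ} (hA : A.IsHermitian) :
    trPos A = (projNonneg A * A).trace.re := by
  rw [trPos, projNonneg_mul hA]

end Aux

/-- Lemma 2 (Bowen–Datta): monotonicity of `Tr (A − B)₊` under a CPTP map given in
Kraus form: `Tr[(Λ(A) − Λ(B))₊] ≤ Tr[(A − B)₊]`. -/
theorem trPos_cptp_le {d d' : ℕ} (A B : Matrix (Fin d) (Fin d) ℂ)
    (hA : A.PosSemidef) (hB : B.PosSemidef)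
    {ι : Type} [Fintype ι] (K : ι → Matrix (Fin d') (Fin d) ℂ)
    (hK : ∑ i, (K i)ᴴ * K i = (1 : Matrix (Fin d) (Fin d) ℂ)) :
    trPos ((∑ i, K i * A * (K i)ᴴ) - ∑ i, K i * B * (K i)ᴴ) ≤ trPos (A - B) := by
  set C := A - B with hCdef
  have hC : C.IsHermitian := hA.1.sub hB.1
  have hsub : ∀ X Y : Matrix (Fin d) (Fin d) ℂ,
      (∑ i, K i * X * (K i)ᴴ) - ∑ i, K i * Y * (K i)ᴴ = ∑ i, K i * (X - Y) * (K i)ᴴ := by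
    intro X Y
    rw [← Finset.sum_sub_distrib]
    refine Finset.sum_congr rfl fun i _ => ?_
    rw [Matrix.mul_sub, Matrix.sub_mul]
  rw [hsub]
  set D := ∑ i, K i * C * (K i)ᴴ with hDdef
  have hD : D.IsHermitian := by
    rw [Matrix.IsHermitian, hDdef, Matrix.conjTranspose_sum]
    refine Finset.sum_congr rfl fun i _ => ?_
    simp [Matrix.conjTranspose_mul, Matrix.mul_assoc, hC.eq]
  set M := ∑ i, K i * (matPos C) * (K i)ᴴ with hMdef
  have hMps : M.PosSemidef :=
    sum_posSemidef' _ fun i => (matPos_posSemidef hC).mul_mul_conjTranspose_same (K i)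
  have hMD : (M - D).PosSemidef := by
    rw [hMdef, hDdef, hsub]
    exact sum_posSemidef' _ fun i =>
      (matPos_sub_posSemidef hC).mul_mul_conjTranspose_same (K i)
  have hP : (projNonneg D).PosSemidef := projNonneg_posSemidef hD
  have step1 : (projNonneg D * D).trace.re ≤ (projNonneg D * M).trace.re := by
    have h := trace_mul_re_nonneg' hP hMD
    rw [Matrix.mul_sub, Matrix.trace_sub, Complex.sub_re] at h
    linarith
  have step2 : (projNonneg D * M).trace.re ≤ M.trace.re := by
    have h := trace_mul_re_nonneg' (one_sub_projNonneg_posSemidef hD) hMps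
    rw [Matrix.sub_mul, Matrix.one_mul, Matrix.trace_sub, Complex.sub_re] at h
    linarith
  have step3 : M.trace = (matPos C).trace := by
    rw [hMdef, Matrix.trace_sum]
    calc ∑ i, (K i * matPos C * (K i)ᴴ).trace
        = ∑ i, ((K i)ᴴ * K i * matPos C).trace := by
          refine Finset.sum_congr rfl fun i _ => ?_
          rw [Matrix.trace_mul_cycle]
      _ = ((∑ i, (K i)ᴴ * K i) * matPos C).trace := by
          rw [Finset.sum_mul, Matrix.trace_sum]
      _ = (matPos C).trace := by rw [hK, Matrix.one_mul]
  calc trPos D = (projNonneg D * D).trace.re := trPos_eq_trace_proj_mul hD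
    _ ≤ M.trace.re := le_trans step1 step2
    _ = (matPos C).trace.re := by rw [step3]
    _ = trPos C := rfl
end
end

section
/- Let ρ be a positive semidefinite d×d complex matrix with Tr ρ ≤ 1, let σ be a positive semidefinite d×d matrix, let γ ∈ ℝ, and let P be an orthogonal projection (P = Pᴴ = P²) such that 2^{−γ}·(PσP) ≤ PρP (in the positive semidefinite order). Then Tr(Pσ) ≤ 2^γ. In particular, Tr[{ρ ≥ 2^{−γ}σ}·σ] ≤ 2^γ, where {ρ ≥ 2^{−γ}σ} is the spectral projection of ρ − 2^{−γ}σ onto [0,∞). -/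
open Matrix
open scoped ComplexOrder

noncomputable section

/-- The real part of the trace of a positive semidefinite matrix is nonnegative. -/
lemma trace_re_nonneg_aux {n : Type*} [Fintype n] {A : Matrix n n ℂ} (hA : A.PosSemidef) :
    0 ≤ A.trace.re := by
  classical
  have h : ∀ i, 0 ≤ (A i i).re := by
    intro i
    have := hA.diag_nonneg (i := i)
    rw [Complex.le_def] at this
    simpa using this.1
  rw [Matrix.trace, Complex.re_sum]
  exact Finset.sum_nonneg fun i _ => h i

section projAux
variable {n : Type*} [Fintype n] [DecidableEq n] {A : Matrix n n ℂ} (hA : A.IsHermitian)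
include hA

lemma projNonneg_def : projNonneg A =
    (hA.eigenvectorUnitary : Matrix n n ℂ) *
      Matrix.diagonal (fun i => if 0 ≤ hA.eigenvalues i then (1 : ℂ) else 0) *
      star (hA.eigenvectorUnitary : Matrix n n ℂ) := by
  rw [projNonneg, dif_pos hA]

lemma projNonneg_diag_herm :
    (Matrix.diagonal (fun i => if 0 ≤ hA.eigenvalues i then (1 : ℂ) else 0))ᴴ =
      Matrix.diagonal (fun i => if 0 ≤ hA.eigenvalues i then (1 : ℂ) else 0) := by
  rw [diagonal_conjTranspose]
  have hf : (star fun i => if 0 ≤ hA.eigenvalues i then (1 : ℂ) else 0) =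
      fun i => if 0 ≤ hA.eigenvalues i then (1 : ℂ) else 0 := by
    funext i
    simp only [Pi.star_apply]
    by_cases h : 0 ≤ hA.eigenvalues i <;> simp [h]
  rw [hf]

lemma projNonneg_isHermitian : (projNonneg A).IsHermitian := by
  rw [projNonneg_def hA, Matrix.star_eq_conjTranspose, Matrix.IsHermitian]
  simp only [conjTranspose_mul, conjTranspose_conjTranspose, projNonneg_diag_herm hA, mul_assoc]

lemma projNonneg_idem : projNonneg A * projNonneg A = projNonneg A := by
  rw [projNonneg_def hA]
  have hU : (star (hA.eigenvectorUnitary : Matrix n n ℂ)) * (hA.eigenvectorUnitary : Matrix n n ℂ) = 1 :=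
    mem_unitaryGroup_iff'.mp hA.eigenvectorUnitary.2
  calc _ = (hA.eigenvectorUnitary : Matrix n n ℂ) *
      ((Matrix.diagonal (fun i => if 0 ≤ hA.eigenvalues i then (1 : ℂ) else 0) *
        ((star (hA.eigenvectorUnitary : Matrix n n ℂ)) * (hA.eigenvectorUnitary : Matrix n n ℂ))) *
        Matrix.diagonal (fun i => if 0 ≤ hA.eigenvalues i then (1 : ℂ) else 0)) *
      star (hA.eigenvectorUnitary : Matrix n n ℂ) := by
        simp only [mul_assoc]
    _ = _ := by
        rw [hU, mul_one, diagonal_mul_diagonal]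
        have hf : (fun i => (if 0 ≤ hA.eigenvalues i then (1 : ℂ) else 0) *
            if 0 ≤ hA.eigenvalues i then (1 : ℂ) else 0) =
            fun i => if 0 ≤ hA.eigenvalues i then (1 : ℂ) else 0 := by
          funext i
          by_cases h : 0 ≤ hA.eigenvalues i <;> simp [h]
        rw [hf]

lemma projNonneg_conj_posSemidef : (projNonneg A * A * projNonneg A).PosSemidef := by
  rw [projNonneg_def hA]
  have hU : (star (hA.eigenvectorUnitary : Matrix n n ℂ)) * (hA.eigenvectorUnitary : Matrix n n ℂ) = 1 :=
    mem_unitaryGroup_iff'.mp hA.eigenvectorUnitary.2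
  set U : Matrix n n ℂ := (hA.eigenvectorUnitary : Matrix n n ℂ)
  set D : Matrix n n ℂ := Matrix.diagonal (fun i => if 0 ≤ hA.eigenvalues i then (1 : ℂ) else 0)
  have hspec := hA.spectral_theorem
  set E : Matrix n n ℂ := Matrix.diagonal (RCLike.ofReal ∘ hA.eigenvalues)
  have key : (U * D * star U) * A * (U * D * star U) = U * (D * E * D) * star U := by
    rw [hspec]
    calc (U * D * star U) * (U * E * star U) * (U * D * star U)
        = U * (D * ((star U * U) * (E * ((star U * U) * D)))) * star U := by
          simp only [mul_assoc]
      _ = U * (D * E * D) * star U := by rw [hU]; simp only [one_mul, mul_assoc]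
  rw [key]
  have : (D * E * D).PosSemidef := by
    rw [diagonal_mul_diagonal, diagonal_mul_diagonal]
    refine posSemidef_diagonal_iff.mpr fun i => ?_
    by_cases h : 0 ≤ hA.eigenvalues i
    · simp only [h, if_true, one_mul, mul_one, Function.comp_apply]
      exact RCLike.ofReal_nonneg.mpr h
    · simp [h]
  have := this.mul_mul_conjTranspose_same U
  rwa [← Matrix.star_eq_conjTranspose] at this

end projAux

/-- Key step: the projection bound for any orthogonal projection. -/
lemma key_proj_bound {d : ℕ} (ρ σ : Matrix (Fin d) (Fin d) ℂ)
    (hρ : ρ.PosSemidef) (hρtr : ρ.trace.re ≤ 1) (γ : ℝ)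
    (P : Matrix (Fin d) (Fin d) ℂ) (hP : P.IsHermitian) (hP2 : P * P = P)
    (hPSD : (P * ρ * P - (2 : ℝ) ^ (-γ) • (P * σ * P)).PosSemidef) :
    (P * σ).trace.re ≤ (2 : ℝ) ^ γ := by
  set c : ℝ := (2 : ℝ) ^ (-γ) with hc
  have hcpos : 0 < c := Real.rpow_pos_of_pos (by norm_num) _
  have htσ : (P * σ * P).trace = (P * σ).trace := by
    rw [trace_mul_cycle, hP2]
  have htρ : (P * ρ * P).trace = (P * ρ).trace := by
    rw [trace_mul_cycle, hP2]
  have h1 : c * (P * σ).trace.re ≤ (P * ρ).trace.re := by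
    have := trace_re_nonneg_aux hPSD
    rw [trace_sub, trace_smul, Complex.sub_re, Complex.real_smul, Complex.mul_re] at this
    simp only [Complex.ofReal_re, Complex.ofReal_im, zero_mul, sub_zero] at this
    rw [htσ, htρ] at this
    linarith
  have hQ2 : (1 - P) * (1 - P) = 1 - P := by
    rw [sub_mul, one_mul, mul_sub, mul_one, hP2, sub_self, sub_zero]
  have hQH : (1 - P).IsHermitian := (isHermitian_one).sub hP
  have hQpsd : ((1 - P) * ρ * (1 - P)).PosSemidef := by
    have := hρ.mul_mul_conjTranspose_same (1 - P)
    rwa [hQH.eq] at this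
  have h2 : (P * ρ).trace.re ≤ ρ.trace.re := by
    have hsplit : ρ.trace = (P * ρ).trace + ((1 - P) * ρ).trace := by
      rw [← trace_add, ← add_mul]
      congr 1
      rw [add_sub_cancel, one_mul]
    have hQt : ((1 - P) * ρ).trace = ((1 - P) * ρ * (1 - P)).trace := by
      rw [trace_mul_cycle, hQ2]
    have := trace_re_nonneg_aux hQpsd
    rw [← hQt] at this
    have := congrArg Complex.re hsplit
    rw [Complex.add_re] at this
    linarith [trace_re_nonneg_aux hQpsd, hQt ▸ (trace_re_nonneg_aux hQpsd)]
  have h3 : c * (P * σ).trace.re ≤ 1 := le_trans h1 (le_trans h2 hρtr)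
  have : (P * σ).trace.re ≤ 1 / c := by
    rw [le_div_iff₀ hcpos]; linarith
  rwa [hc, Real.rpow_neg (by norm_num), one_div, inv_inv] at this

/-- Lemma 3 (Bowen–Datta): if `Tr ρ ≤ 1`, `σ ≥ 0`, and `P` is an orthogonal projection with
`2^{−γ}·(PσP) ≤ PρP`, then `Tr(Pσ) ≤ 2^γ`.  In particular
`Tr[{ρ ≥ 2^{−γ}σ}·σ] ≤ 2^γ` for the spectral projection `{ρ ≥ 2^{−γ}σ}` of `ρ − 2^{−γ}σ`
onto `[0,∞)`. -/
theorem trace_proj_sigma_le {d : ℕ} (ρ σ : Matrix (Fin d) (Fin d) ℂ)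
    (hρ : ρ.PosSemidef) (hρtr : ρ.trace.re ≤ 1) (hσ : σ.PosSemidef) (γ : ℝ) :
    (∀ P : Matrix (Fin d) (Fin d) ℂ, P.IsHermitian → P * P = P →
        (P * ρ * P - (2 : ℝ) ^ (-γ) • (P * σ * P)).PosSemidef →
        (P * σ).trace.re ≤ (2 : ℝ) ^ γ) ∧
      (projNonneg (ρ - (2 : ℝ) ^ (-γ) • σ) * σ).trace.re ≤ (2 : ℝ) ^ γ := by
  refine ⟨fun P hP hP2 hPSD => key_proj_bound ρ σ hρ hρtr γ P hP hP2 hPSD, ?_⟩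
  set c : ℝ := (2 : ℝ) ^ (-γ) with hc
  have hσherm : (c • σ).IsHermitian := by
    rw [Matrix.IsHermitian, conjTranspose_smul]
    rw [hσ.1.eq]
    simp
  have hA : (ρ - c • σ).IsHermitian := hρ.1.sub hσherm
  set P := projNonneg (ρ - c • σ)
  have hPherm : P.IsHermitian := projNonneg_isHermitian hA
  have hP2 : P * P = P := projNonneg_idem hA
  have hPSD : (P * ρ * P - c • (P * σ * P)).PosSemidef := by
    have := projNonneg_conj_posSemidef hA
    have heq : P * (ρ - c • σ) * P = P * ρ * P - c • (P * σ * P) := by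
      rw [mul_sub, sub_mul, mul_smul_comm, smul_mul_assoc]
    rwa [heq] at this
  exact key_proj_bound ρ σ hρ hρtr γ P hPherm hP2 hPSD

end
end

section
/- Converse bound for entanglement concentration: let σ_AB be any state on ℂ^{d_A} ⊗ ℂ^{d_B} with σ_B := Tr_A σ_AB, let M be a natural number with 1 ≤ M ≤ min(d_A, d_B), and let Φ⁺_M be the projector onto the maximally entangled unit vector (1/√M) ∑_{k=1}^M e_k ⊗ e_k (e_k the standard basis vectors). Then for every γ ∈ ℝ: ⟨Φ⁺_M| σ_AB |Φ⁺_M⟩ ≤ Tr(σ_AB − 2^{−γ}(I_A ⊗ σ_B))₊ + 2^{−γ}/M. -/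
open Matrix
open scoped ComplexOrder

noncomputable section

open Kronecker

/-- Partial trace over the first (`A`) tensor factor. -/
def trA {dA dB : ℕ} (M : Matrix (Fin dA × Fin dB) (Fin dA × Fin dB) ℂ) :
    Matrix (Fin dB) (Fin dB) ℂ :=
  Matrix.of fun k l => ∑ i, M (i, k) (i, l)

/-- The maximally entangled unit vector `(1/√M) ∑_{k<M} e_k ⊗ e_k` on `ℂ^{d_A} ⊗ ℂ^{d_B}`. -/
def mesVec (dA dB M : ℕ) : Fin dA × Fin dB → ℂ :=
  fun x => if (x.1 : ℕ) = (x.2 : ℕ) ∧ (x.1 : ℕ) < M then ((1 / Real.sqrt M : ℝ) : ℂ) else 0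

lemma quad_le_trPos {n : Type*} [Fintype n] [DecidableEq n] (A : Matrix n n ℂ)
    (hA : A.IsHermitian) (v : n → ℂ) (hv : (star v ⬝ᵥ v).re ≤ 1) :
    (star v ⬝ᵥ A *ᵥ v).re ≤ trPos A := by
  classical
  set U := (hA.eigenvectorUnitary : Matrix n n ℂ) with hU
  set w := star U *ᵥ v with hw
  have hsw : star v ᵥ* U = star w := by
    rw [hw, star_mulVec, star_eq_conjTranspose, conjTranspose_conjTranspose]
  have hquad : star v ⬝ᵥ A *ᵥ v
      = ∑ i, (hA.eigenvalues i : ℂ) * (star (w i) * w i) := by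
    conv_lhs => rw [hA.spectral_theorem, Unitary.conjStarAlgAut_apply]
    rw [← mulVec_mulVec, ← mulVec_mulVec, dotProduct_mulVec, hsw]
    simp only [dotProduct, mulVec_diagonal, Function.comp_apply, Pi.star_apply]
    exact Finset.sum_congr rfl fun i _ => by rw [← hw, mul_left_comm]; rfl
  have hnorm : (∑ i, Complex.normSq (w i)) ≤ 1 := by
    have h1 : star w ⬝ᵥ w = star v ⬝ᵥ v := by
      rw [hw, star_mulVec, star_eq_conjTranspose, conjTranspose_conjTranspose,
        dotProduct_mulVec, vecMul_vecMul, ← star_eq_conjTranspose,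
        Matrix.mem_unitaryGroup_iff.mp (hA.eigenvectorUnitary).2, vecMul_one]
    have h2 : (star w ⬝ᵥ w).re = ∑ i, Complex.normSq (w i) := by
      simp [dotProduct, Complex.normSq_apply, Complex.mul_re, mul_comm]
    rw [← h2, h1]; exact hv
  have hre : (star v ⬝ᵥ A *ᵥ v).re = ∑ i, hA.eigenvalues i * Complex.normSq (w i) := by
    rw [hquad]
    rw [Complex.re_sum]
    refine Finset.sum_congr rfl fun i _ => ?_
    have : star (w i) * w i = (Complex.normSq (w i) : ℂ) := by
      rw [Complex.star_def, Complex.normSq_eq_conj_mul_self]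
    rw [this, ← Complex.ofReal_mul, Complex.ofReal_re]
  have htr : trPos A = ∑ i, max (hA.eigenvalues i) 0 := by
    unfold trPos matPos
    rw [dif_pos hA, Matrix.trace_mul_cycle,
      Matrix.mem_unitaryGroup_iff'.mp (hA.eigenvectorUnitary).2, one_mul, trace_diagonal]
    simp [Complex.re_sum]
  rw [hre, htr]
  have hwle : ∀ i, Complex.normSq (w i) ≤ 1 := fun i =>
    le_trans (Finset.single_le_sum (f := fun i => Complex.normSq (w i))
      (fun i _ => Complex.normSq_nonneg _) (Finset.mem_univ i)) hnorm
  refine Finset.sum_le_sum fun i _ => ?_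
  calc hA.eigenvalues i * Complex.normSq (w i)
      ≤ max (hA.eigenvalues i) 0 * Complex.normSq (w i) := by
        exact mul_le_mul_of_nonneg_right (le_max_left _ _) (Complex.normSq_nonneg _)
    _ ≤ max (hA.eigenvalues i) 0 * 1 := by
        exact mul_le_mul_of_nonneg_left (hwle i) (le_max_right _ _)
    _ = max (hA.eigenvalues i) 0 := mul_one _

lemma ecIteSum {dA : ℕ} (M : ℕ) (hMA : M ≤ dA) (j : ℕ) (a : ℝ) :
    ∑ i : Fin dA, (if ((i : ℕ) = j ∧ (i : ℕ) < M) then a else 0)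
      = if j < M then a else 0 := by
  by_cases hj : j < M
  · rw [if_pos hj, Finset.sum_eq_single (⟨j, lt_of_lt_of_le hj hMA⟩ : Fin dA)]
    · simp [hj]
    · intro b _ hb
      rw [if_neg]
      rintro ⟨h1, -⟩
      exact hb (Fin.ext h1)
    · simp
  · rw [if_neg hj]
    refine Finset.sum_eq_zero fun i _ => ?_
    rw [if_neg]
    rintro ⟨h1, h2⟩
    exact hj (h1 ▸ h2)

lemma ecCountSum {dB : ℕ} (M : ℕ) (hMB : M ≤ dB) (a : ℝ) :
    ∑ j : Fin dB, (if (j : ℕ) < M then a else 0) = M * a := by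
  rw [Fin.sum_univ_eq_sum_range (fun n => if n < M then a else 0) dB, ← Finset.sum_filter]
  have : (Finset.range dB).filter (· < M) = Finset.range M := by
    ext x
    simp only [Finset.mem_filter, Finset.mem_range]
    omega
  rw [this, Finset.sum_const, Finset.card_range, nsmul_eq_mul]

/-- Converse bound for entanglement concentration: for any state `σ_AB` and any `γ`,
`⟨Φ⁺_M| σ_AB |Φ⁺_M⟩ ≤ Tr(σ_AB − 2^{−γ}(1_A ⊗ σ_B))₊ + 2^{−γ}/M`. -/
theorem ec_converse_bound {dA dB : ℕ}
    (σAB : Matrix (Fin dA × Fin dB) (Fin dA × Fin dB) ℂ)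
    (hσ : σAB.PosSemidef) (hσtr : σAB.trace = 1)
    (M : ℕ) (hM1 : 1 ≤ M) (hM : M ≤ min dA dB) (γ : ℝ) :
    (star (mesVec dA dB M) ⬝ᵥ σAB.mulVec (mesVec dA dB M)).re ≤
      trPos (σAB - (2 : ℝ) ^ (-γ) • ((1 : Matrix (Fin dA) (Fin dA) ℂ) ⊗ₖ trA σAB)) +
        (2 : ℝ) ^ (-γ) / M := by
  classical
  have hMA : M ≤ dA := le_trans hM (min_le_left _ _)
  have hMB : M ≤ dB := le_trans hM (min_le_right _ _)
  have hM0 : (0 : ℝ) < M := by exact_mod_cast hM1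
  set t : ℝ := (2 : ℝ) ^ (-γ) with ht
  have ht0 : 0 < t := Real.rpow_pos_of_pos two_pos _
  set Y := trA σAB with hYdef
  set v := mesVec dA dB M with hvdef
  set c : ℝ := 1 / Real.sqrt M with hc
  have hcc : (c : ℂ) * (c : ℂ) = ((1 / (M : ℝ) : ℝ) : ℂ) := by
    rw [← Complex.ofReal_mul]
    congr 1
    rw [hc, div_mul_div_comm, one_mul, Real.mul_self_sqrt (le_of_lt hM0)]
  -- Hermitian facts
  have hY : Y.IsHermitian := by
    show Yᴴ = Y
    ext k l
    simp only [conjTranspose_apply, hYdef, trA, Matrix.of_apply, star_sum]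
    exact Finset.sum_congr rfl fun i _ => hσ.1.apply (i, k) (i, l)
  have hK : ((1 : Matrix (Fin dA) (Fin dA) ℂ) ⊗ₖ Y).IsHermitian := by
    show _ᴴ = _
    ext x y
    rw [conjTranspose_apply, kronecker_apply, kronecker_apply, star_mul', hY.apply x.2 y.2]
    simp only [one_apply]
    by_cases h : x.1 = y.1
    · simp [h, mul_comm]
    · simp [h, Ne.symm h]
  have hC : (σAB - t • ((1 : Matrix (Fin dA) (Fin dA) ℂ) ⊗ₖ Y)).IsHermitian := by
    refine hσ.1.sub ?_
    show _ᴴ = _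
    rw [conjTranspose_smul, hK, star_trivial]
  -- value of star v ⬝ᵥ v
  have hvv : (star v ⬝ᵥ v).re ≤ 1 := by
    have h1 : star v ⬝ᵥ v = ∑ x : Fin dA × Fin dB,
        (if ((x.1 : ℕ) = (x.2 : ℕ) ∧ (x.1 : ℕ) < M) then ((1 / (M : ℝ) : ℝ) : ℂ) else 0) := by
      refine Finset.sum_congr rfl fun x _ => ?_
      have hvx : v x = if ((x.1 : ℕ) = (x.2 : ℕ) ∧ (x.1 : ℕ) < M) then (c : ℂ) else 0 := rfl
      rw [Pi.star_apply, hvx]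
      by_cases hx : ((x.1 : ℕ) = (x.2 : ℕ) ∧ (x.1 : ℕ) < M)
      · rw [if_pos hx, if_pos hx, Complex.star_def, Complex.conj_ofReal, hcc]
      · rw [if_neg hx, if_neg hx, star_zero, zero_mul]
    rw [h1, Complex.re_sum]
    have h2 : ∀ x : Fin dA × Fin dB,
        ((if ((x.1 : ℕ) = (x.2 : ℕ) ∧ (x.1 : ℕ) < M) then ((1 / (M : ℝ) : ℝ) : ℂ) else 0)).re
        = if ((x.1 : ℕ) = (x.2 : ℕ) ∧ (x.1 : ℕ) < M) then (1 / (M : ℝ)) else 0 := by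
      intro x
      split <;> simp
    rw [Finset.sum_congr rfl fun x _ => h2 x, Fintype.sum_prod_type_right]
    have h3 : ∀ j : Fin dB, ∑ i : Fin dA,
        (if ((i : ℕ) = (j : ℕ) ∧ (i : ℕ) < M) then (1 / (M : ℝ)) else 0)
        = if (j : ℕ) < M then (1 / (M : ℝ)) else 0 := fun j => ecIteSum M hMA j _
    rw [Finset.sum_congr rfl fun j _ => h3 j, ecCountSum M hMB]
    rw [mul_one_div, div_self (ne_of_gt hM0)]
  -- diagonal entries of Y
  have hYdiag : ∀ j : Fin dB, 0 ≤ (Y j j).re := by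
    intro j
    have hz : ∀ z : Fin dA × Fin dB, 0 ≤ (σAB z z).re := by
      intro z
      have h0 := hσ.dotProduct_mulVec_nonneg (Pi.single z 1)
      have : star (Pi.single z 1) ⬝ᵥ σAB *ᵥ Pi.single z 1 = σAB z z := by
        simp [dotProduct, mulVec, Pi.single_apply, Finset.sum_ite_eq, apply_ite star]
      rw [this] at h0
      exact (Complex.le_def.mp h0).1
    have : (Y j j).re = ∑ i, (σAB (i, j) (i, j)).re := by
      show (trA σAB j j).re = _
      rw [trA, Matrix.of_apply, Complex.re_sum]
    rw [this]
    exact Finset.sum_nonneg fun i _ => hz (i, j)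
  have htrY : ∑ j : Fin dB, (Y j j).re = 1 := by
    have h1 : ∑ j : Fin dB, Y j j = σAB.trace := by
      rw [Matrix.trace, Fintype.sum_prod_type_right]
      rfl
    have := congrArg Complex.re h1
    rwa [Complex.re_sum, hσtr, Complex.one_re] at this
  -- quadratic form of the kronecker part
  have hE : (star v ⬝ᵥ ((1 : Matrix (Fin dA) (Fin dA) ℂ) ⊗ₖ Y) *ᵥ v).re ≤ 1 / M := by
    have h1 : star v ⬝ᵥ ((1 : Matrix (Fin dA) (Fin dA) ℂ) ⊗ₖ Y) *ᵥ v
        = ∑ x : Fin dA × Fin dB, (if ((x.1 : ℕ) = (x.2 : ℕ) ∧ (x.1 : ℕ) < M)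
            then ((1 / (M : ℝ) : ℝ) : ℂ) * Y x.2 x.2 else 0) := by
      refine Finset.sum_congr rfl fun x _ => ?_
      have hve : ∀ y : Fin dA × Fin dB,
          v y = if ((y.1 : ℕ) = (y.2 : ℕ) ∧ (y.1 : ℕ) < M) then (c : ℂ) else 0 := fun _ => rfl
      rw [Pi.star_apply]
      by_cases hx : ((x.1 : ℕ) = (x.2 : ℕ) ∧ (x.1 : ℕ) < M)
      · rw [if_pos hx]
        have hvx : v x = (c : ℂ) := by rw [hve x, if_pos hx]
        have hmv : (((1 : Matrix (Fin dA) (Fin dA) ℂ) ⊗ₖ Y) *ᵥ v) x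
            = Y x.2 x.2 * (c : ℂ) := by
          rw [mulVec, dotProduct, Finset.sum_eq_single x]
          · rw [kronecker_apply, one_apply_eq, one_mul, hvx]
          · intro y _ hy
            rcases eq_or_ne y.1 x.1 with h'|h'
            · have hv0 : v y = 0 := by
                rw [hve y, if_neg]
                rintro ⟨e1, -⟩
                apply hy
                have e2 : (y.2 : ℕ) = (x.2 : ℕ) := by rw [← e1, h', hx.1]
                exact Prod.ext h' (Fin.ext e2)
              rw [hv0, mul_zero]
            · rw [kronecker_apply, one_apply_ne (Ne.symm h'), zero_mul, zero_mul]
          · intro h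
            exact absurd (Finset.mem_univ x) h
        rw [hvx, hmv, Complex.star_def, Complex.conj_ofReal, mul_comm (Y x.2 x.2),
          ← mul_assoc, hcc]
      · rw [if_neg hx]
        have hvx : v x = 0 := by rw [hve x, if_neg hx]
        rw [hvx, star_zero, zero_mul]
    rw [h1, Complex.re_sum]
    have h2 : ∀ x : Fin dA × Fin dB,
        ((if ((x.1 : ℕ) = (x.2 : ℕ) ∧ (x.1 : ℕ) < M)
          then ((1 / (M : ℝ) : ℝ) : ℂ) * Y x.2 x.2 else 0)).re
        = if ((x.1 : ℕ) = (x.2 : ℕ) ∧ (x.1 : ℕ) < M)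
          then (1 / (M : ℝ)) * (Y x.2 x.2).re else 0 := by
      intro x
      split
      · simp [Complex.mul_re]
      · simp
    rw [Finset.sum_congr rfl fun x _ => h2 x, Fintype.sum_prod_type_right]
    have h3 : ∀ j : Fin dB, ∑ i : Fin dA,
        (if ((i : ℕ) = (j : ℕ) ∧ (i : ℕ) < M) then (1 / (M : ℝ)) * (Y j j).re else 0)
        = if (j : ℕ) < M then (1 / (M : ℝ)) * (Y j j).re else 0 := fun j =>
      ecIteSum M hMA j _
    rw [Finset.sum_congr rfl fun j _ => h3 j]
    calc ∑ j : Fin dB, (if (j : ℕ) < M then (1 / (M : ℝ)) * (Y j j).re else 0)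
        ≤ ∑ j : Fin dB, (1 / (M : ℝ)) * (Y j j).re := by
          refine Finset.sum_le_sum fun j _ => ?_
          split
          · exact le_refl _
          · exact mul_nonneg (by positivity) (hYdiag j)
      _ = (1 / (M : ℝ)) * ∑ j : Fin dB, (Y j j).re := by rw [Finset.mul_sum]
      _ = 1 / (M : ℝ) := by rw [htrY, mul_one]
  -- decomposition and conclusion
  have hsplit : star v ⬝ᵥ σAB *ᵥ v
      = star v ⬝ᵥ (σAB - t • ((1 : Matrix (Fin dA) (Fin dA) ℂ) ⊗ₖ Y)) *ᵥ v
        + t • (star v ⬝ᵥ ((1 : Matrix (Fin dA) (Fin dA) ℂ) ⊗ₖ Y) *ᵥ v) := by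
    rw [← dotProduct_smul, ← smul_mulVec, ← dotProduct_add, ← add_mulVec,
      sub_add_cancel]
  show (star v ⬝ᵥ σAB *ᵥ v).re ≤ _
  rw [hsplit, Complex.add_re]
  have h₂ : (t • (star v ⬝ᵥ ((1 : Matrix (Fin dA) (Fin dA) ℂ) ⊗ₖ Y) *ᵥ v)).re
      = t * (star v ⬝ᵥ ((1 : Matrix (Fin dA) (Fin dA) ℂ) ⊗ₖ Y) *ᵥ v).re := by
    rw [Complex.real_smul, Complex.mul_re]
    simp
  rw [h₂]
  have hb := quad_le_trPos _ hC v hvv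
  have hb2 : t * (star v ⬝ᵥ ((1 : Matrix (Fin dA) (Fin dA) ℂ) ⊗ₖ Y) *ᵥ v).re ≤ t / M := by
    calc t * (star v ⬝ᵥ ((1 : Matrix (Fin dA) (Fin dA) ℂ) ⊗ₖ Y) *ᵥ v).re
        ≤ t * (1 / M) := mul_le_mul_of_nonneg_left hE (le_of_lt ht0)
      _ = t / M := by rw [mul_one_div]
  exact add_le_add hb hb2
end
end
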